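/- Let (Pₙ), (Qₙ) be sequences of probability measures with Qₙ contiguous with respect to Pₙ (Pₙ(Aₙ) → 0 ⟹ Qₙ(Aₙ) → 0). Then the singular part of Qₙ with respect to Pₙ vanishes asymptotically: Qₙ⊥(𝒳ₙ) → 0, and the absolutely continuous parts Qₙᵃ are uniformly absolutely continuous with respect to Pₙ: for every ε > 0 there is δ > 0 such that for all n and all measurable A, Pₙ(A) ≤ δ implies Qₙᵃ(A) ≤ ε + o(1) (i.e. for all sequences Aₙ with Pₙ(Aₙ) ≤ δ eventually, limsup Qₙᵃ(Aₙ) ≤ ε). -/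

import Mathlib

open MeasureTheory Filter ENNReal

/-- If `Qₙ` is contiguous with respect to `Pₙ`, then the singular parts vanish
asymptotically and the absolutely continuous parts are asymptotically uniformly
absolutely continuous with respect to `Pₙ`. -/
theorem stmt12 {α : ℕ → Type*} [∀ n, MeasurableSpace (α n)]
    (P Q : ∀ n, Measure (α n))
    [∀ n, IsProbabilityMeasure (P n)] [∀ n, IsProbabilityMeasure (Q n)]
    (hcontig : ∀ A : ∀ n, Set (α n), (∀ n, MeasurableSet (A n)) →
      Tendsto (fun n => P n (A n)) atTop (nhds 0) →
      Tendsto (fun n => Q n (A n)) atTop (nhds 0)) :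
    Tendsto (fun n => (Q n).singularPart (P n) Set.univ) atTop (nhds 0) ∧
      ∀ ε : ℝ≥0∞, 0 < ε → ∃ δ : ℝ≥0∞, 0 < δ ∧
        ∀ A : ∀ n, Set (α n), (∀ n, MeasurableSet (A n)) →
          (∀ᶠ n in atTop, P n (A n) ≤ δ) →
          Filter.limsup (fun n =>
            ((P n).withDensity ((Q n).rnDeriv (P n))) (A n)) atTop ≤ ε := by
  classical
  constructor
  · -- singular parts vanish
    have hsing : ∀ n, (Q n).singularPart (P n) ⟂ₘ P n := fun n =>
      Measure.mutuallySingular_singularPart _ _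
    choose s hs h1 h2 using hsing
    have hQ : Tendsto (fun n => Q n ((s n)ᶜ)) atTop (nhds 0) := by
      refine hcontig _ (fun n => (hs n).compl) ?_
      simp only [h2]
      exact tendsto_const_nhds
    refine tendsto_of_tendsto_of_tendsto_of_le_of_le tendsto_const_nhds hQ
      (fun n => zero_le) (fun n => ?_)
    have hle : (Q n).singularPart (P n) Set.univ ≤
        (Q n).singularPart (P n) (s n) + (Q n).singularPart (P n) ((s n)ᶜ) := by
      rw [← Set.union_compl_self (s n)]
      exact measure_union_le _ _
    rw [h1, zero_add] at hle
    exact hle.trans (Measure.singularPart_le (Q n) (P n) _)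
  · -- uniform absolute continuity of the a.c. parts
    by_contra h
    push_neg at h
    obtain ⟨ε, hε, H⟩ := h
    have hδ : ∀ k : ℕ, (0 : ℝ≥0∞) < ((k : ℝ≥0∞) + 1)⁻¹ := fun k =>
      ENNReal.inv_pos.mpr (by simp [ENNReal.add_ne_top])
    choose A hA hAP hAlim using fun k : ℕ => H ((k : ℝ≥0∞) + 1)⁻¹ (hδ k)
    choose N hN using fun k : ℕ => eventually_atTop.1 (hAP k)
    have hfreq : ∀ k : ℕ, ∃ᶠ n in atTop,
        ε < (P n).withDensity ((Q n).rnDeriv (P n)) (A k n) := fun k =>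
      frequently_lt_of_lt_limsup (by isBoundedDefault) (hAlim k)
    have key : ∀ k b : ℕ, ∃ n, b ≤ n ∧
        ε < (P n).withDensity ((Q n).rnDeriv (P n)) (A k n) := by
      intro k b
      obtain ⟨n, h1, h2⟩ := ((hfreq k).and_eventually (eventually_ge_atTop b)).exists
      exact ⟨n, h2, h1⟩
    choose f hf1 hf2 using key
    -- recursive subsequence
    set m : ℕ → ℕ := fun k =>
      Nat.rec (f 0 (N 0)) (fun k mk => f (k + 1) (max (N (k + 1)) (mk + 1))) k with hm_def
    have hm_succ : ∀ k, m (k + 1) = f (k + 1) (max (N (k + 1)) (m k + 1)) := fun k => rfl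
    have hm_mono : StrictMono m := by
      apply strictMono_nat_of_lt_succ
      intro k
      have := hf1 (k + 1) (max (N (k + 1)) (m k + 1))
      rw [← hm_succ k] at this
      exact lt_of_lt_of_le (Nat.lt_succ_self _) ((le_max_right _ _).trans this)
    have hm_ge_N : ∀ k, N k ≤ m k := by
      intro k
      cases k with
      | zero => exact hf1 0 (N 0)
      | succ k =>
        have := hf1 (k + 1) (max (N (k + 1)) (m k + 1))
        rw [← hm_succ k] at this
        exact (le_max_left _ _).trans this
    have hm_big : ∀ k, ε < (P (m k)).withDensity ((Q (m k)).rnDeriv (P (m k))) (A k (m k)) := by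
      intro k
      cases k with
      | zero => exact hf2 0 (N 0)
      | succ k =>
        have := hf2 (k + 1) (max (N (k + 1)) (m k + 1))
        rw [← hm_succ k] at this
        exact this
    set c : ℕ → ℕ := fun n => Nat.findGreatest (fun k => m k ≤ n) n with hc_def
    set B : ∀ n, Set (α n) := fun n => A (c n) n with hB_def
    have hc_ge : ∀ k n, m k ≤ n → k ≤ c n := fun k n h =>
      Nat.le_findGreatest (hm_mono.le_apply.trans h) h
    have hc_spec : ∀ n, m 0 ≤ n → m (c n) ≤ n := fun n hn =>
      Nat.findGreatest_spec (P := fun k => m k ≤ n) (Nat.zero_le n) hn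
    have hc_top : Tendsto c atTop atTop :=
      tendsto_atTop.2 fun k => eventually_atTop.2 ⟨m k, fun n hn => hc_ge k n hn⟩
    have hc_m : ∀ k, c (m k) = k := by
      intro k
      refine le_antisymm ?_ (hc_ge k (m k) le_rfl)
      have h1 : m (c (m k)) ≤ m k := hc_spec (m k) (hm_mono.monotone (Nat.zero_le k))
      exact hm_mono.le_iff_le.1 h1
    -- P n (B n) → 0
    have hPB : Tendsto (fun n => P n (B n)) atTop (nhds 0) := by
      have hupper : Tendsto (fun n => ((c n : ℝ≥0∞) + 1)⁻¹) atTop (nhds 0) := by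
        have h1 : Tendsto (fun n => c n + 1) atTop atTop :=
          tendsto_atTop_mono (fun n => Nat.le_succ _) hc_top
        have h2 := ENNReal.tendsto_inv_nat_nhds_zero.comp h1
        convert h2 using 2 with n
        simp [Function.comp]
      refine tendsto_of_tendsto_of_tendsto_of_le_of_le' tendsto_const_nhds hupper
        (Eventually.of_forall fun n => zero_le) ?_
      refine eventually_atTop.2 ⟨m 0, fun n hn => ?_⟩
      have h1 : N (c n) ≤ n := (hm_ge_N (c n)).trans (hc_spec n hn)
      exact hN (c n) n h1
    have hQB := hcontig B (fun n => hA (c n) n) hPB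
    have hev : ∀ᶠ n in atTop, Q n (B n) < ε := hQB.eventually (gt_mem_nhds hε)
    have hfr : ∃ᶠ n in atTop, ε < Q n (B n) := by
      refine (hm_mono.tendsto_atTop).frequently (Frequently.of_forall fun k => ?_)
      have h1 : ε < (P (m k)).withDensity ((Q (m k)).rnDeriv (P (m k))) (B (m k)) := by
        rw [hB_def]
        simp only [hc_m k]
        exact hm_big k
      exact h1.trans_le (Measure.withDensity_rnDeriv_le (Q (m k)) (P (m k)) _)
    obtain ⟨n, h1, h2⟩ := (hfr.and_eventually hev).exists
    exact absurd h1 (not_lt.2 h2.le)
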